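/- Let θ, μ, c > 0 and λ(t) = λ₀ + Σ_{k=1}^{K}(a_k sin(kt) + b_k cos(kt)) with inf_t λ(t) > cμ, and let q₀ > c. Define G(t, α) = (e^α − 1)·(λ₀(1 − e^{−θt})/θ + Σ_{k=1}^{K} ((a_kθ + b_k k)sin(kt) + (b_kθ − a_k k)(cos(kt) − e^{−θt}))/(θ² + k²)) + (c(θ−μ)/θ)·α + (q₀ − c(θ−μ)/θ)·log((e^α − 1)e^{−θt} + 1). Then G satisfies ∂G/∂t = λ(t)(e^α − 1) + θ(e^{−α} − 1)·∂G/∂α − c(θ−μ)(e^{−α} − 1), with G(0, α) = α q₀. -/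

import Mathlib

open Real

private lemma hasDerivAt_expneg (theta t : ℝ) :
    HasDerivAt (fun s : ℝ => Real.exp (-theta * s)) (-theta * Real.exp (-theta * t)) t := by
  have h := (Real.hasDerivAt_exp (-theta * t)).comp t ((hasDerivAt_id t).const_mul (-theta))
  simpa [Function.comp_def, mul_comm] using h

private lemma hasDerivAt_sinmul (k t : ℝ) :
    HasDerivAt (fun s : ℝ => Real.sin (k * s)) (k * Real.cos (k * t)) t := by
  have h := (Real.hasDerivAt_sin (k * t)).comp t ((hasDerivAt_id t).const_mul k)
  simpa [Function.comp_def, mul_comm] using h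

private lemma hasDerivAt_cosmul (k t : ℝ) :
    HasDerivAt (fun s : ℝ => Real.cos (k * s)) (-(k * Real.sin (k * t))) t := by
  have h := (Real.hasDerivAt_cos (k * t)).comp t ((hasDerivAt_id t).const_mul k)
  simpa [Function.comp_def, mul_comm] using h

theorem erlangA_nonstationary_fluid_cgf_pde
    (theta mu c : ℝ) (htheta : 0 < theta) (hmu : 0 < mu) (hc : 0 < c)
    (K : ℕ) (lam₀ : ℝ) (a b : ℕ → ℝ) (lam : ℝ → ℝ)
    (hlam : ∀ t, lam t = lam₀ + ∑ k ∈ Finset.Icc 1 K, (a k * sin (k * t) + b k * cos (k * t)))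
    (hover : c * mu < ⨅ t : ℝ, lam t)
    (q₀ : ℝ) (hq₀ : c < q₀)
    (G : ℝ → ℝ → ℝ)
    (hG : ∀ t α, G t α =
      (exp α - 1) *
        (lam₀ * (1 - exp (-theta * t)) / theta +
          ∑ k ∈ Finset.Icc 1 K,
            ((a k * theta + b k * k) * sin (k * t)
              + (b k * theta - a k * k) * (cos (k * t) - exp (-theta * t)))
              / (theta ^ 2 + k ^ 2))
      + c * (theta - mu) / theta * α
      + (q₀ - c * (theta - mu) / theta) * Real.log ((exp α - 1) * exp (-theta * t) + 1)) :
    (∀ t α : ℝ, 0 < (exp α - 1) * exp (-theta * t) + 1 →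
      deriv (fun s => G s α) t
        = lam t * (exp α - 1) + theta * (exp (-α) - 1) * deriv (fun a' => G t a') α
          - c * (theta - mu) * (exp (-α) - 1)) ∧
    (∀ α : ℝ, G 0 α = α * q₀) := by
  set A : ℝ := c * (theta - mu) / theta with hA
  set B : ℝ := q₀ - c * (theta - mu) / theta with hB
  set F : ℝ → ℝ := fun s => lam₀ * (1 - exp (-theta * s)) / theta +
      ∑ k ∈ Finset.Icc 1 K,
        ((a k * theta + b k * k) * sin (k * s)
          + (b k * theta - a k * k) * (cos (k * s) - exp (-theta * s)))
          / (theta ^ 2 + k ^ 2) with hF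
  constructor
  · intro t α hD
    set X : ℝ := exp (-theta * t) with hX
    set D : ℝ := (exp α - 1) * X + 1 with hDdef
    -- derivative of F
    have hFd : HasDerivAt F
        (lam₀ * (0 - (-theta * X)) / theta +
          ∑ k ∈ Finset.Icc 1 K,
            ((a k * theta + b k * k) * ((k : ℝ) * cos (k * t))
              + (b k * theta - a k * k) * (-((k : ℝ) * sin (k * t)) - (-theta * X)))
              / (theta ^ 2 + k ^ 2)) t := by
      apply HasDerivAt.add
      · exact (((hasDerivAt_const t (1:ℝ)).sub (hasDerivAt_expneg theta t)).const_mul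
          lam₀).div_const theta
      · apply HasDerivAt.fun_sum
        intro k hk
        exact ((((hasDerivAt_sinmul k t).const_mul _).add
          (((hasDerivAt_cosmul k t).sub (hasDerivAt_expneg theta t)).const_mul _)).div_const _)
    have hFd' : HasDerivAt F (lam t - theta * F t) t := by
      convert hFd using 1
      rw [hlam, hF]
      simp only
      rw [mul_add, Finset.mul_sum]
      have hθk : ∀ k : ℕ, theta ^ 2 + (k : ℝ) ^ 2 ≠ 0 := by
        intro k
        positivity
      have hsum : ∑ k ∈ Finset.Icc 1 K, (a k * sin (k * t) + b k * cos (k * t))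
          - ∑ k ∈ Finset.Icc 1 K, theta *
            (((a k * theta + b k * k) * sin (k * t)
              + (b k * theta - a k * k) * (cos (k * t) - X)) / (theta ^ 2 + k ^ 2))
          = ∑ k ∈ Finset.Icc 1 K,
            ((a k * theta + b k * k) * ((k : ℝ) * cos (k * t))
              + (b k * theta - a k * k) * (-((k : ℝ) * sin (k * t)) - (-theta * X)))
              / (theta ^ 2 + k ^ 2) := by
        rw [← Finset.sum_sub_distrib]
        apply Finset.sum_congr rfl
        intro k _
        field_simp
        ring
      have hlam1 : lam₀ - theta * (lam₀ * (1 - X) / theta) = lam₀ * (0 - (-theta * X)) / theta := by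
        field_simp
        ring
      calc lam₀ + (∑ k ∈ Finset.Icc 1 K, (a k * sin (k * t) + b k * cos (k * t)))
            - (theta * (lam₀ * (1 - X) / theta) + ∑ k ∈ Finset.Icc 1 K, theta *
              (((a k * theta + b k * k) * sin (k * t)
                + (b k * theta - a k * k) * (cos (k * t) - X)) / (theta ^ 2 + k ^ 2)))
          = (lam₀ - theta * (lam₀ * (1 - X) / theta))
            + ((∑ k ∈ Finset.Icc 1 K, (a k * sin (k * t) + b k * cos (k * t)))
              - ∑ k ∈ Finset.Icc 1 K, theta *
                (((a k * theta + b k * k) * sin (k * t)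
                  + (b k * theta - a k * k) * (cos (k * t) - X)) / (theta ^ 2 + k ^ 2))) := by
            ring
        _ = _ := by rw [hlam1, hsum]
    -- derivative in t of G
    have hu : HasDerivAt (fun s : ℝ => (exp α - 1) * exp (-theta * s) + 1)
        ((exp α - 1) * (-theta * X)) t :=
      ((hasDerivAt_expneg theta t).const_mul _).add_const 1
    have hDne : D ≠ 0 := ne_of_gt hD
    have hlog : HasDerivAt (fun s : ℝ => Real.log ((exp α - 1) * exp (-theta * s) + 1))
        ((exp α - 1) * (-theta * X) / D) t := hu.log hDne
    have hGt : HasDerivAt (fun s => G s α)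
        ((exp α - 1) * (lam t - theta * F t) + A * 0 + B * ((exp α - 1) * (-theta * X) / D)) t := by
      have h := (((hFd'.const_mul (exp α - 1)).add
        ((hasDerivAt_const t (A * α)))).add (hlog.const_mul B))
      have heq : (fun s => G s α) = fun s =>
          (exp α - 1) * F s + A * α + B * Real.log ((exp α - 1) * exp (-theta * s) + 1) := by
        funext s
        rw [hG]
      rw [heq]
      exact h.congr_deriv (by ring)
    -- derivative in α of G
    have hE := Real.hasDerivAt_exp α
    have hu2 : HasDerivAt (fun a' : ℝ => (exp a' - 1) * X + 1) (exp α * X) α :=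
      ((hE.sub_const 1).mul_const X).add_const 1
    have hlog2 : HasDerivAt (fun a' : ℝ => Real.log ((exp a' - 1) * X + 1))
        (exp α * X / D) α := hu2.log hDne
    have hGa : HasDerivAt (fun a' => G t a')
        (exp α * F t + A * 1 + B * (exp α * X / D)) α := by
      have h := ((((hE.sub_const 1).mul_const (F t)).add
        ((hasDerivAt_id α).const_mul A)).add (hlog2.const_mul B))
      have heq : (fun a' => G t a') = fun a' =>
          (exp a' - 1) * F t + A * a' + B * Real.log ((exp a' - 1) * X + 1) := by
        funext a'
        rw [hG]
      rw [heq]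
      exact h
    rw [hGt.deriv, hGa.deriv, Real.exp_neg]
    have hEne : exp α ≠ 0 := Real.exp_ne_zero α
    rw [hA]
    field_simp
    ring
  · intro α
    rw [hG]
    have h1 : ∀ k ∈ Finset.Icc 1 K,
        ((a k * theta + b k * k) * sin (k * (0:ℝ))
          + (b k * theta - a k * k) * (cos (k * (0:ℝ)) - exp (-theta * 0)))
          / (theta ^ 2 + k ^ 2) = 0 := by
      intro k _
      simp
    rw [Finset.sum_congr rfl h1]
    simp only [mul_zero, neg_zero, Real.exp_zero, sub_self, Finset.sum_const_zero,
      mul_one, add_zero, mul_zero, zero_div]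
    rw [sub_add_cancel, Real.log_exp]
    ring
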